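/- arXiv:1701.01052 — 4 statements merged into one kernel-verified Lean document; each statement's English description precedes it below -/
import Mathlib

section
/- For x ∈ ℂ with Re(x) > 0 and p, k > 0, the integral ∫₀^∞ e^{-t^k/p} t^{x-1} dt (the p-k Gamma function) equals (p^{x/k}/k) · Γ(x/k), where Γ is the classical Gamma function. -/
open MeasureTheory

theorem stmt1 (x : ℂ) (hx : 0 < x.re) (p k : ℝ) (hp : 0 < p) (hk : 0 < k) :
    ∫ t in Set.Ioi (0 : ℝ), (Real.exp (-(t ^ k) / p) : ℂ) * (t : ℂ) ^ (x - 1)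
      = (p : ℂ) ^ (x / k) / k * Complex.Gamma (x / k) := by
  have hkC : (k : ℂ) ≠ 0 := by exact_mod_cast hk.ne'
  have hpC : (p : ℂ) ≠ 0 := by exact_mod_cast hp.ne'
  set f : ℝ → ℂ := fun s => (Real.exp (-(s / p)) : ℂ) * (s : ℂ) ^ (x / k - 1) with hf
  -- Step 1: substitute s = t^k
  have h1 : (∫ t in Set.Ioi (0:ℝ), (k * t ^ (k - 1)) • f (t ^ k))
      = ∫ s in Set.Ioi (0:ℝ), f s := integral_comp_rpow_Ioi_of_pos hk
  have h2 : (∫ t in Set.Ioi (0:ℝ), (k * t ^ (k - 1)) • f (t ^ k))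
      = (k : ℂ) * ∫ t in Set.Ioi (0 : ℝ),
          (Real.exp (-(t ^ k) / p) : ℂ) * (t : ℂ) ^ (x - 1) := by
    rw [← integral_const_mul]
    refine setIntegral_congr_fun measurableSet_Ioi (fun t ht => ?_)
    have ht0 : (0:ℝ) < t := ht
    have htC : (t : ℂ) ≠ 0 := by exact_mod_cast ht0.ne'
    have hcp : ((t ^ k : ℝ) : ℂ) ^ (x / k - 1) = (t : ℂ) ^ (x - k) := by
      rw [← Complex.cpow_mul_ofReal_nonneg ht0.le]
      congr 1
      field_simp
    simp only [hf, hcp]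
    rw [Complex.real_smul, Complex.ofReal_mul, Complex.ofReal_cpow ht0.le, neg_div,
      show (x - 1 : ℂ) = ((k - 1 : ℝ) : ℂ) + (x - k) by push_cast; ring,
      Complex.cpow_add _ _ htC]
    ring
  -- Step 2: substitute s = p * u
  have h3 : (∫ u in Set.Ioi (0:ℝ), f (p * u)) = p⁻¹ • ∫ s in Set.Ioi (p * 0), f s :=
    integral_comp_mul_left_Ioi f 0 hp
  have h4 : (∫ u in Set.Ioi (0:ℝ), f (p * u))
      = (p : ℂ) ^ (x / k - 1) * Complex.GammaIntegral (x / k) := by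
    rw [Complex.GammaIntegral, ← integral_const_mul]
    refine setIntegral_congr_fun measurableSet_Ioi (fun u hu => ?_)
    have hu0 : (0:ℝ) < u := hu
    simp only [hf]
    rw [show p * u / p = u by field_simp, Complex.ofReal_mul,
      Complex.mul_cpow_ofReal_nonneg hp.le hu0.le]
    ring
  have hGamma : Complex.GammaIntegral (x / k) = Complex.Gamma (x / k) := by
    rw [Complex.Gamma_eq_integral]
    have : (x / (k:ℂ)).re = x.re / k := by
      rw [Complex.div_ofReal_re]
    rw [this]
    positivity
  have key : (∫ s in Set.Ioi (0:ℝ), f s)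
      = (p : ℂ) ^ (x / k) * Complex.Gamma (x / k) := by
    rw [mul_zero] at h3
    have h5 : (∫ s in Set.Ioi (0:ℝ), f s) = p • ∫ u in Set.Ioi (0:ℝ), f (p * u) := by
      rw [h3, smul_smul, mul_inv_cancel₀ hp.ne', one_smul]
    rw [h5, h4, hGamma, Complex.real_smul,
      show (x / (k:ℂ)) = 1 + (x / k - 1) by ring, Complex.cpow_add _ _ hpC,
      Complex.cpow_one]
    ring_nf
  rw [← h1, h2] at key
  field_simp at key ⊢
  linear_combination key
end

section
/- For x ∈ ℂ with Re(x) > 0, p, k > 0, and n ∈ ℕ, the p-k Pochhammer symbol equals the ratio _pΓ_k(x + nk) / _pΓ_k(x), i.e. _p(x)_{n,k} · _pΓ_k(x) = _pΓ_k(x + nk). -/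
open Finset

noncomputable def pkPoch (p k : ℝ) (x : ℂ) (n : ℕ) : ℂ :=
  ∏ i ∈ Finset.range n, (x * p / k + i * p)

noncomputable def pkGamma (p k : ℝ) (x : ℂ) : ℂ :=
  (p : ℂ) ^ (x / k) / k * Complex.Gamma (x / k)

theorem stmt2 (x : ℂ) (hx : 0 < x.re) (p k : ℝ) (hp : 0 < p) (hk : 0 < k) (n : ℕ) :
    pkPoch p k x n * pkGamma p k x = pkGamma p k (x + n * k) := by
  have hk0 : (k : ℂ) ≠ 0 := by exact_mod_cast hk.ne'
  have hp0 : (p : ℂ) ≠ 0 := by exact_mod_cast hp.ne'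
  induction n with
  | zero => simp [pkPoch]
  | succ n ih =>
    have hz : x / k + n ≠ 0 := by
      intro h
      have hre : (x / k + (n : ℂ)).re = x.re / k + n := by
        simp [Complex.add_re, Complex.div_ofReal_re]
      have : x.re / k + (n : ℝ) > 0 := by positivity
      rw [h] at hre
      simp at hre
      linarith
    have key : (x + (n + 1 : ℕ) * k) / k = (x + n * k) / k + 1 := by
      push_cast
      field_simp
      ring
    have key2 : (x + n * k) / k = x / k + n := by
      field_simp
    rw [pkPoch, Finset.prod_range_succ, ← pkPoch, mul_right_comm, ih,
      pkGamma, pkGamma, key, key2, Complex.Gamma_add_one _ hz,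
      Complex.cpow_add _ 1 hp0, Complex.cpow_add _ (n:ℂ) hp0,
      Complex.cpow_one, Complex.cpow_natCast]
    field_simp
end

section
/- For x ∈ ℂ with Re(x) > 0, p, k > 0, and integer m ≥ 2, the Gauss multiplication formula ∏_{r=0}^{m-1} _pΓ_k(x + kr/m) = (p^{(m-1)/2}/k^{m-1}) · (2π)^{(m-1)/2} · m^{1/2 - mx/k} · _pΓ_k(mx) holds. -/
open Real Finset Filter Complex Nat Topology

lemma abs_one_sub_exp (θ : ℝ) (h : 0 ≤ Real.sin (θ/2)) :
    ‖(1 - Complex.exp (θ * Complex.I))‖ = 2 * Real.sin (θ/2) := by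
  have h1 : (1 : ℂ) - Complex.exp (θ * Complex.I)
      = Complex.ofReal (1 - Real.cos θ) - Complex.ofReal (Real.sin θ) * Complex.I := by
    rw [Complex.exp_mul_I, ← Complex.ofReal_cos, ← Complex.ofReal_sin]
    push_cast
    ring
  have h2 : Real.cos θ = 1 - 2 * Real.sin (θ/2)^2 := by
    have e1 : Real.cos (2 * (θ/2)) = 2 * Real.cos (θ/2)^2 - 1 := Real.cos_two_mul _
    have e2 := Real.sin_sq_add_cos_sq (θ/2)
    have : 2 * (θ/2) = θ := by ring
    rw [this] at e1
    nlinarith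
  have h3 : (0:ℝ) ≤ 2 * Real.sin (θ/2) := by positivity
  rw [h1, ← Real.sqrt_sq h3, Complex.norm_def, Complex.normSq_apply]
  congr 1
  simp only [Complex.sub_re, Complex.sub_im, Complex.ofReal_re, Complex.ofReal_im,
    Complex.mul_re, Complex.mul_im, Complex.I_re, Complex.I_im]
  nlinarith [Real.sin_sq_add_cos_sq θ]

-- sine product
lemma sin_prod (m : ℕ) (hm : 2 ≤ m) :
    ∏ r ∈ Finset.range (m - 1), Real.sin (π * (r + 1) / m) = m / 2 ^ (m - 1) := by
  have hm0 : (m : ℕ) ≠ 0 := by omega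
  have hζ : IsPrimitiveRoot (Complex.exp (2 * π * Complex.I / m)) m :=
    Complex.isPrimitiveRoot_exp m hm0
  have hm1 : m - 1 + 1 = m := by omega
  have key : ∏ r ∈ Finset.range (m - 1), (1 - Complex.exp (2 * π * Complex.I / m) ^ (r + 1))
      = ((m - 1 : ℕ) + 1 : ℂ) := by
    have := IsPrimitiveRoot.prod_one_sub_pow_eq_order (n := m - 1)
      (μ := Complex.exp (2 * π * Complex.I / m)) (by rwa [hm1])
    exact_mod_cast this
  have habs : ∀ r ∈ Finset.range (m - 1),
      ‖(1 - Complex.exp (2 * π * Complex.I / m) ^ (r + 1))‖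
        = 2 * Real.sin (π * (r + 1) / m) := by
    intro r hr
    simp only [Finset.mem_range] at hr
    rw [← Complex.exp_nat_mul]
    have harg : (r + 1 : ℕ) * (2 * π * Complex.I / m)
        = ((2 * π * (r+1) / m : ℝ) : ℂ) * Complex.I := by
      push_cast
      field_simp
    rw [harg, abs_one_sub_exp]
    · congr 1
      ring_nf
    · have h1 : 0 < π * (r + 1) / m := by
        have : (0:ℝ) < (r:ℝ) + 1 := by positivity
        have hmpos : (0:ℝ) < m := by positivity
        positivity
      have h2 : π * (r + 1) / m < π := by
        have hmpos : (0:ℝ) < m := by exact_mod_cast Nat.pos_of_ne_zero hm0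
        rw [div_lt_iff₀ hmpos]
        have : (r:ℝ) + 1 < m := by exact_mod_cast (by omega : r + 1 < m)
        nlinarith [Real.pi_pos]
      have : 2 * π * (↑r + 1) / ↑m / 2 = π * (r+1) / m := by ring
      rw [this]
      exact le_of_lt (Real.sin_pos_of_pos_of_lt_pi h1 h2)
  have := congrArg (‖·‖) key
  rw [Complex.norm_prod] at this
  rw [Finset.prod_congr rfl habs] at this
  rw [Finset.prod_mul_distrib, Finset.prod_const] at this
  have hcard : (Finset.range (m-1)).card = m - 1 := Finset.card_range _
  rw [hcard] at this
  have habs2 : ‖((m - 1 : ℕ) + 1 : ℂ)‖ = m := by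
    rw [show ((m - 1 : ℕ) + 1 : ℂ) = (m : ℂ) by exact_mod_cast congrArg (Nat.cast : ℕ → ℂ) hm1]
    simp [Complex.norm_natCast]
  rw [habs2] at this
  have h2pos : (0:ℝ) < 2 ^ (m-1) := by positivity
  field_simp at this ⊢
  linarith

lemma Gamma_prod (m : ℕ) (hm : 2 ≤ m) :
    ∏ r ∈ Finset.range (m - 1), Real.Gamma ((r + 1) / m)
      = (2 * π) ^ (((m:ℝ) - 1) / 2) / Real.sqrt m := by
  set P := ∏ r ∈ Finset.range (m - 1), Real.Gamma ((r + 1) / m) with hP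
  have hmpos : (0:ℝ) < m := by positivity
  have hPpos : 0 < P := by
    apply Finset.prod_pos
    intro r hr
    apply Real.Gamma_pos_of_pos
    positivity
  -- the reflected product equals P
  have hrefl : ∏ r ∈ Finset.range (m - 1), Real.Gamma (1 - (r + 1) / m) = P := by
    rw [hP, ← Finset.prod_range_reflect]
    apply Finset.prod_congr rfl
    intro j hj
    simp only [Finset.mem_range] at hj
    congr 1
    have h1 : ((m - 1 - 1 - j : ℕ) : ℝ) = (m:ℝ) - 2 - j := by
      have h2 : m - 1 - 1 - j = m - (2 + j) := by omega
      rw [h2, Nat.cast_sub (by omega : 2 + j ≤ m)]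
      push_cast; ring
    rw [h1]
    field_simp
    ring
  have hsq : P ^ 2 = (2 * π) ^ (m - 1) / m := by
    have : P ^ 2 = ∏ r ∈ Finset.range (m - 1),
        (Real.Gamma ((r + 1) / m) * Real.Gamma (1 - (r + 1) / m)) := by
      rw [Finset.prod_mul_distrib, hrefl, ← hP, sq]
    rw [this]
    have : ∀ r ∈ Finset.range (m - 1),
        Real.Gamma ((r + 1) / m) * Real.Gamma (1 - (r + 1) / m)
          = π / Real.sin (π * (r + 1) / m) := by
      intro r hr
      rw [Real.Gamma_mul_Gamma_one_sub]
      congr 2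
      ring
    rw [Finset.prod_congr rfl this, Finset.prod_div_distrib, Finset.prod_const,
      Finset.card_range, sin_prod m hm]
    rw [mul_pow]
    field_simp
  -- conclude
  have h2 : (2 * π) ^ (m - 1) / (m:ℝ) = ((2 * π) ^ (((m:ℝ) - 1) / 2) / Real.sqrt m) ^ 2 := by
    rw [div_pow, sq_sqrt hmpos.le, ← Real.rpow_natCast (2*π) (m-1),
      ← Real.rpow_two, ← Real.rpow_mul (by positivity)]
    congr 2
    push_cast [Nat.cast_sub (by omega : 1 ≤ m)]
    ring
  have hrhs : 0 < (2 * π) ^ (((m:ℝ) - 1) / 2) / Real.sqrt m := by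
    have := Real.pi_pos
    positivity
  nlinarith [hsq, h2, hPpos, hrhs]

lemma cpow_prod {a : ℂ} (ha : a ≠ 0) (s : Finset ℕ) (f : ℕ → ℂ) :
    ∏ i ∈ s, a ^ f i = a ^ (∑ i ∈ s, f i) := by
  induction s using Finset.cons_induction with
  | empty => simp
  | cons i s hi ih => rw [Finset.prod_cons, Finset.sum_cons, ih, ← Complex.cpow_add _ _ ha]

lemma prod_range_mul_block {M : Type*} [CommMonoid M] (f : ℕ → M) (m n : ℕ) :
    ∏ l ∈ Finset.range (m * n), f l
      = ∏ j ∈ Finset.range n, ∏ r ∈ Finset.range m, f (j * m + r) := by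
  induction n with
  | zero => simp
  | succ n ih =>
    rw [Nat.mul_succ, Finset.prod_range_add, ih, Finset.prod_range_succ]
    congr 1
    apply Finset.prod_congr rfl
    intro r hr
    congr 1
    ring

lemma ne_zero_of_re_pos' {w : ℂ} (h : 0 < w.re) : w ≠ 0 := by
  intro hc; rw [hc] at h; simp at h

lemma sum_z_add (m : ℕ) (hm : 2 ≤ m) (z : ℂ) :
    ∑ r ∈ Finset.range m, (z + (r:ℂ) / m) = (m:ℂ) * z + ((((m:ℝ) - 1) / 2 : ℝ) : ℂ) := by
  rw [Finset.sum_add_distrib, Finset.sum_const, Finset.card_range, nsmul_eq_mul]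
  congr 1
  rw [← Finset.sum_div]
  have h3 : ∑ r ∈ Finset.range m, (r : ℂ) = (m * (m - 1) / 2 : ℂ) := by
    have h1 := Finset.sum_range_id_mul_two m
    have h2 : ((∑ r ∈ Finset.range m, r : ℕ) : ℂ) * 2 = (m:ℂ) * ((m:ℂ) - 1) := by
      rw [← Nat.cast_ofNat, ← Nat.cast_mul, h1]
      push_cast [Nat.cast_sub (by omega : 1 ≤ m)]
      ring
    push_cast at h2 ⊢
    linear_combination h2 / 2
  rw [h3]
  push_cast
  have hmne : (m:ℂ) ≠ 0 := Nat.cast_ne_zero.mpr (by omega)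
  field_simp


-- the key algebraic identity
lemma gammaSeq_prod_eq (m : ℕ) (hm : 2 ≤ m) (z : ℂ) (hz : 0 < z.re) (n : ℕ) (hn : 1 ≤ n) :
    ∏ r ∈ Finset.range m, Complex.GammaSeq (z + r / m) n
      = Complex.GammaSeq ((m : ℂ) * z) (m * n + m - 1)
        * (((n : ℝ) / ((m : ℝ) * n + m - 1) : ℝ) : ℂ) ^ ((m : ℂ) * z)
        * ((((n : ℝ) ^ (((m : ℝ) - 1) / 2) : ℝ) : ℂ) * ((n ! : ℂ)) ^ m
            * (m : ℂ) ^ (m * (n + 1)) / (((m * n + m - 1)! : ℕ) : ℂ)) := by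
  have hmpos : 0 < m := by omega
  have hmC : (m : ℂ) ≠ 0 := Nat.cast_ne_zero.mpr (by omega)
  have hnC : (n : ℂ) ≠ 0 := Nat.cast_ne_zero.mpr (by omega)
  have hN1 : m * n + m - 1 + 1 = m * (n + 1) := by rw [Nat.mul_succ]; omega
  set N := m * n + m - 1 with hNdef
  -- positivity of real parts
  have hrepos : ∀ (r j : ℕ), 0 < (z + r / m + j).re := by
    intro r j
    have he : z + (r : ℂ) / (m : ℂ) + (j : ℂ) = z + ((((r : ℝ) / m + j : ℝ)) : ℂ) := by
      push_cast; ring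
    rw [he, Complex.add_re, Complex.ofReal_re]
    have : (0:ℝ) ≤ (r:ℝ)/m + j := by positivity
    linarith
  have hfac : ∀ (r j : ℕ), z + r / m + j ≠ 0 := fun r j => ne_zero_of_re_pos' (hrepos r j)
  -- denominators
  have hB : ∏ l ∈ Finset.range (m * (n+1)), ((m:ℂ) * z + l)
      = (m : ℂ) ^ (m * (n+1)) * ∏ r ∈ Finset.range m, ∏ j ∈ Finset.range (n+1), (z + r / m + j) := by
    have h1 : ∀ l : ℕ, (m:ℂ) * z + l = (m:ℂ) * (z + l / m) := by
      intro l; field_simp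
    calc ∏ l ∈ Finset.range (m * (n+1)), ((m:ℂ) * z + l)
        = ∏ l ∈ Finset.range (m * (n+1)), ((m:ℂ) * (z + l / m)) := by
          exact Finset.prod_congr rfl fun l _ => h1 l
      _ = (m:ℂ) ^ (m * (n+1)) * ∏ l ∈ Finset.range (m * (n+1)), (z + l / m) := by
          rw [Finset.prod_mul_distrib, Finset.prod_const, Finset.card_range]
      _ = (m:ℂ) ^ (m * (n+1)) * ∏ j ∈ Finset.range (n+1), ∏ r ∈ Finset.range m, (z + r / m + j) := by
          rw [prod_range_mul_block (fun l => z + l / m) m (n+1)]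
          congr 1
          refine Finset.prod_congr rfl fun j _ => Finset.prod_congr rfl fun r _ => ?_
          push_cast
          field_simp
          ring
      _ = (m:ℂ) ^ (m * (n+1)) * ∏ r ∈ Finset.range m, ∏ j ∈ Finset.range (n+1), (z + r / m + j) := by
          rw [Finset.prod_comm]
  -- numerator of LHS
  have hA : ∏ r ∈ Finset.range m, ((n:ℂ) ^ (z + r / m) * (n ! : ℂ))
      = (n:ℂ) ^ ((m:ℂ) * z) * (((n : ℝ) ^ (((m : ℝ) - 1) / 2) : ℝ) : ℂ) * ((n ! : ℂ)) ^ m := by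
    rw [Finset.prod_mul_distrib, Finset.prod_const, Finset.card_range,
      cpow_prod hnC]
    have hsum := sum_z_add m hm z
    rw [hsum, Complex.cpow_add _ _ hnC]
    congr 1
    congr 1
    rw [Complex.ofReal_cpow (by positivity : (0:ℝ) ≤ (n:ℝ))]
    norm_cast
  -- expand GammaSeq and conclude
  have hGS : ∀ r ∈ Finset.range m, Complex.GammaSeq (z + r / m) n
      = (n:ℂ) ^ (z + r / m) * (n ! : ℂ) / ∏ j ∈ Finset.range (n+1), (z + r / m + j) := by
    intro r _; rfl
  rw [Finset.prod_congr rfl hGS, Finset.prod_div_distrib, hA]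
  rw [Complex.GammaSeq, hN1]
  have hBne : ∏ r ∈ Finset.range m, ∏ j ∈ Finset.range (n+1), (z + r / m + j) ≠ 0 :=
    Finset.prod_ne_zero_iff.mpr fun r _ => Finset.prod_ne_zero_iff.mpr fun j _ => hfac r j
  have hNpos : 0 < N := by omega
  have hNC : ((N : ℂ)) ≠ 0 := Nat.cast_ne_zero.mpr (by omega)
  have hNfacne : (((N)! : ℕ) : ℂ) ≠ 0 := Nat.cast_ne_zero.mpr (Nat.factorial_ne_zero _)
  have hNcpow : (N : ℂ) ^ ((m:ℂ) * z) ≠ 0 := by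
    intro h
    exact hNC ((Complex.cpow_eq_zero_iff _ _).mp h).1
  -- ratio of cpows
  have hratio : (((n : ℝ) / ((m : ℝ) * n + m - 1) : ℝ) : ℂ) ^ ((m : ℂ) * z)
      = (n : ℂ) ^ ((m:ℂ) * z) / (N : ℂ) ^ ((m:ℂ) * z) := by
    have hNr : ((m : ℝ) * n + m - 1) = (N : ℝ) := by
      rw [hNdef]
      have : (1:ℕ) ≤ m * n + m := by nlinarith
      push_cast [Nat.cast_sub this]
      ring
    have hNrpos : (0:ℝ) < (N:ℝ) := by
      have : 0 < N := by omega
      exact_mod_cast this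
    have key : ((((n:ℝ) / (N:ℝ)) : ℝ) : ℂ) * (((N:ℝ) : ℝ) : ℂ) ^ ((1:ℂ)) = 0 → True := fun _ => trivial
    have key2 := Complex.mul_cpow_ofReal_nonneg (a := (n:ℝ)/(N:ℝ)) (b := (N:ℝ))
      (by positivity) hNrpos.le ((m:ℂ)*z)
    have hcancel : (((n:ℝ) / (N:ℝ) : ℝ) : ℂ) * ((N:ℝ) : ℂ) = ((n:ℝ) : ℂ) := by
      push_cast
      field_simp
    rw [hcancel] at key2
    push_cast at key2
    rw [hNr, eq_div_iff hNcpow]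
    push_cast
    exact key2.symm
  rw [hB, hratio]
  set B := ∏ r ∈ Finset.range m, ∏ j ∈ Finset.range (n+1), (z + r / m + j) with hBdef
  have hmpow : (m:ℂ) ^ (m * (n+1)) ≠ 0 := pow_ne_zero _ hmC
  field_simp

lemma gauss_mult (m : ℕ) (hm : 2 ≤ m) (z : ℂ) (hz : 0 < z.re) :
    ∏ r ∈ Finset.range m, Complex.Gamma (z + r / m)
      = Complex.Gamma ((m : ℂ) * z) * (((1 / m : ℝ)) : ℂ) ^ ((m : ℂ) * z)
        * ((m : ℂ) * ((∏ r ∈ Finset.range (m - 1), Real.Gamma ((r + 1) / m) : ℝ) : ℂ)) := by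
  have hmpos : 0 < m := by omega
  have hmC : (m : ℂ) ≠ 0 := Nat.cast_ne_zero.mpr (by omega)
  have hmR : (0:ℝ) < m := by exact_mod_cast hmpos
  set q : ℕ → ℝ := fun n => (n : ℝ) / ((m : ℝ) * n + m - 1) with hqdef
  set d : ℕ → ℂ := fun n => (((n : ℝ) ^ (((m : ℝ) - 1) / 2) : ℝ) : ℂ) * ((n ! : ℂ)) ^ m
      * (m : ℂ) ^ (m * (n + 1)) / (((m * n + m - 1)! : ℕ) : ℂ) with hddef
  -- q tends to 1/m
  have hq : Tendsto q atTop (𝓝 (1 / m)) := by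
    have h1 : Tendsto (fun n : ℕ => (m : ℝ) + ((m : ℝ) - 1) / n) atTop (𝓝 ((m:ℝ) + 0)) :=
      tendsto_const_nhds.add (tendsto_const_div_atTop_nhds_zero_nat ((m:ℝ) - 1))
    rw [add_zero] at h1
    have h2 : Tendsto (fun n : ℕ => ((m:ℝ) + ((m:ℝ) - 1) / n)⁻¹) atTop (𝓝 ((m:ℝ))⁻¹) :=
      h1.inv₀ (by positivity)
    rw [one_div]
    refine Tendsto.congr' ?_ h2
    filter_upwards [eventually_ge_atTop 1] with n hn
    have hn0 : (1:ℝ) ≤ n := by exact_mod_cast hn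
    have hm1 : (1:ℝ) ≤ (m:ℝ) := by exact_mod_cast (by omega : 1 ≤ m)
    have hden : (0:ℝ) < (m:ℝ) * n + m - 1 := by nlinarith
    rw [hqdef]
    simp only
    rw [inv_eq_iff_eq_inv, eq_comm, inv_div]
    rw [div_eq_iff (by linarith)]
    field_simp
    ring
  -- q n positive for n ≥ 1
  have hqpos : ∀ n : ℕ, 1 ≤ n → 0 < q n := by
    intro n hn
    have hn0 : (1:ℝ) ≤ n := by exact_mod_cast hn
    have hm1 : (1:ℝ) ≤ (m:ℝ) := by exact_mod_cast (by omega : 1 ≤ m)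
    apply _root_.div_pos (by linarith)
    nlinarith
  -- cpow limit, generic exponent
  have hqC : ∀ w : ℂ, Tendsto (fun n => ((q n : ℝ) : ℂ) ^ w) atTop
      (𝓝 ((((1 / m : ℝ)) : ℂ) ^ w)) := by
    intro w
    have hbase : Tendsto (fun n => ((q n : ℝ) : ℂ)) atTop (𝓝 (((1 / m : ℝ)) : ℂ)) :=
      (Complex.continuous_ofReal.tendsto _).comp hq
    have hslit : (((1 / m : ℝ)) : ℂ) ∈ Complex.slitPlane := by
      rw [Complex.mem_slitPlane_iff]
      left
      simp only [Complex.ofReal_re]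
      positivity
    exact ((continuousAt_cpow_const hslit).tendsto).comp hbase
  -- index map to atTop
  have hidx : Tendsto (fun n : ℕ => m * n + m - 1) atTop atTop := by
    apply tendsto_atTop_atTop.mpr
    intro b
    refine ⟨b, fun a ha => ?_⟩
    have h1 : a ≤ m * a := Nat.le_mul_of_pos_left a hmpos
    omega
  -- GammaSeq limits
  have hF : ∀ w : ℂ, Tendsto (fun n => ∏ r ∈ Finset.range m, Complex.GammaSeq (w + r / m) n)
      atTop (𝓝 (∏ r ∈ Finset.range m, Complex.Gamma (w + r / m))) := by
    intro w
    exact tendsto_finset_prod _ fun r _ => Complex.GammaSeq_tendsto_Gamma _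
  have hG : ∀ w : ℂ, Tendsto (fun n => Complex.GammaSeq ((m:ℂ) * w) (m * n + m - 1))
      atTop (𝓝 (Complex.Gamma ((m:ℂ) * w))) :=
    fun w => (Complex.GammaSeq_tendsto_Gamma _).comp hidx
  -- d converges, via z₀ = 1/m
  set z₀ : ℂ := 1 / m with hz₀def
  have hz₀ : 0 < z₀.re := by
    rw [hz₀def]
    have : (1:ℂ)/m = (((1/m : ℝ)):ℂ) := by push_cast; ring
    rw [this, Complex.ofReal_re]
    positivity
  have hmz₀ : (m:ℂ) * z₀ = 1 := by
    rw [hz₀def]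
    field_simp
  set L : ℂ := (∏ r ∈ Finset.range m, Complex.Gamma (z₀ + r / m)) / (((1/m : ℝ)) : ℂ) with hLdef
  have hd : Tendsto d atTop (𝓝 L) := by
    have hden : Tendsto (fun n => Complex.GammaSeq ((m:ℂ) * z₀) (m * n + m - 1)
        * ((q n : ℝ) : ℂ) ^ ((m:ℂ) * z₀)) atTop
        (𝓝 (Complex.Gamma ((m:ℂ) * z₀) * (((1/m : ℝ)) : ℂ) ^ ((m:ℂ) * z₀))) :=
      (hG z₀).mul (hqC _)
    have hdenval : Complex.Gamma ((m:ℂ) * z₀) * (((1/m : ℝ)) : ℂ) ^ ((m:ℂ) * z₀)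
        = (((1/m : ℝ)) : ℂ) := by
      rw [hmz₀, Complex.Gamma_one, Complex.cpow_one, one_mul]
    have hdenne : ((((1/m : ℝ)) : ℂ)) ≠ 0 := by
      simp only [ne_eq, Complex.ofReal_eq_zero]
      positivity
    rw [hdenval] at hden
    have htend : Tendsto (fun n => (∏ r ∈ Finset.range m, Complex.GammaSeq (z₀ + r / m) n)
        / (Complex.GammaSeq ((m:ℂ) * z₀) (m * n + m - 1) * ((q n : ℝ) : ℂ) ^ ((m:ℂ) * z₀)))
        atTop (𝓝 L) := by
      rw [hLdef]
      exact (hF z₀).div hden hdenne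
    apply htend.congr'
    filter_upwards [eventually_ge_atTop 1] with n hn
    have hkey := gammaSeq_prod_eq m hm z₀ hz₀ n hn
    have hGne : Complex.GammaSeq ((m:ℂ) * z₀) (m * n + m - 1) ≠ 0 := by
      rw [hmz₀, Complex.GammaSeq]
      apply div_ne_zero
      · apply mul_ne_zero
        · intro hc
          rcases (Complex.cpow_eq_zero_iff _ _).mp hc with ⟨h1, _⟩
          rw [Nat.cast_eq_zero] at h1
          omega
        · exact Nat.cast_ne_zero.mpr (Nat.factorial_ne_zero _)
      · apply Finset.prod_ne_zero_iff.mpr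
        intro j _
        have : (0:ℝ) < (1 + (j:ℝ)) := by positivity
        intro hc
        have := congrArg Complex.re hc
        push_cast at this
        simp at this
        linarith
    have hQne : ((q n : ℝ) : ℂ) ^ ((m:ℂ) * z₀) ≠ 0 := by
      intro hc
      rcases (Complex.cpow_eq_zero_iff _ _).mp hc with ⟨h1, _⟩
      rw [Complex.ofReal_eq_zero] at h1
      exact (hqpos n hn).ne' h1
    rw [hkey]
    exact mul_div_cancel_left₀ _ (mul_ne_zero hGne hQne)
  -- main identity: both limits
  have hmain : Tendsto (fun n => ∏ r ∈ Finset.range m, Complex.GammaSeq (z + r / m) n)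
      atTop (𝓝 (Complex.Gamma ((m:ℂ) * z) * (((1/m : ℝ)) : ℂ) ^ ((m:ℂ) * z) * L)) := by
    have := ((hG z).mul (hqC ((m:ℂ) * z))).mul hd
    apply this.congr'
    filter_upwards [eventually_ge_atTop 1] with n hn
    exact (gammaSeq_prod_eq m hm z hz n hn).symm
  have := tendsto_nhds_unique (hF z) hmain
  rw [this]
  congr 1
  -- L = m * real product
  rw [hLdef]
  rw [div_eq_iff (by simp only [ne_eq, Complex.ofReal_eq_zero]; positivity : (((1/m:ℝ)):ℂ) ≠ 0)]
  have hterm : ∀ r ∈ Finset.range m, Complex.Gamma (z₀ + r / m)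
      = ((Real.Gamma ((r + 1) / m) : ℝ) : ℂ) := by
    intro r _
    rw [← Complex.Gamma_ofReal]
    congr 1
    rw [hz₀def]
    push_cast
    ring
  rw [Finset.prod_congr rfl hterm, ← Complex.ofReal_prod]
  have hsplit : ∏ r ∈ Finset.range m, Real.Gamma ((r + 1) / m)
      = ∏ r ∈ Finset.range (m-1), Real.Gamma ((r + 1) / m) := by
    have h := Finset.prod_range_succ (fun r : ℕ => Real.Gamma (((r:ℝ) + 1) / m)) (m-1)
    rw [show m - 1 + 1 = m by omega] at h
    rw [h]
    have hcast : (((m-1:ℕ)):ℝ) + 1 = (m:ℝ) := by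
      push_cast [Nat.cast_sub (by omega : 1 ≤ m)]
      ring
    rw [hcast, div_self (by positivity), Real.Gamma_one, mul_one]
  rw [hsplit]
  push_cast
  field_simp

theorem stmt9 (x : ℂ) (hx : 0 < x.re) (p k : ℝ) (hp : 0 < p) (hk : 0 < k)
    (m : ℕ) (hm : 2 ≤ m) :
    ∏ r ∈ Finset.range m, pkGamma p k (x + k * r / m)
      = ((p ^ (((m : ℝ) - 1) / 2) / k ^ (m - 1) : ℝ) : ℂ)
        * (((2 * π) ^ (((m : ℝ) - 1) / 2) : ℝ) : ℂ)
        * (m : ℂ) ^ ((1 / 2 : ℂ) - m * x / k)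
        * pkGamma p k (m * x) := by
  have hmpos : 0 < m := by omega
  have hmC : (m : ℂ) ≠ 0 := Nat.cast_ne_zero.mpr (by omega)
  have hmR : (0:ℝ) < m := by exact_mod_cast hmpos
  have hkC : (k : ℂ) ≠ 0 := Complex.ofReal_ne_zero.mpr hk.ne'
  have hpC : (p : ℂ) ≠ 0 := Complex.ofReal_ne_zero.mpr hp.ne'
  set z : ℂ := x / k with hzdef
  have hzre : 0 < z.re := by
    rw [hzdef, Complex.div_ofReal_re]
    positivity
  -- rewrite each factor
  have hfac : ∀ r ∈ Finset.range m, pkGamma p k (x + k * r / m)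
      = (p : ℂ) ^ (z + r / m) * ((k:ℂ))⁻¹ * Complex.Gamma (z + r / m) := by
    intro r _
    have harg : (x + (k:ℂ) * r / m) / k = z + r / m := by
      rw [hzdef]
      field_simp
    rw [pkGamma, harg, div_eq_mul_inv]
  rw [Finset.prod_congr rfl hfac, Finset.prod_mul_distrib, Finset.prod_mul_distrib,
    Finset.prod_const, Finset.card_range, cpow_prod hpC, sum_z_add m hm z,
    gauss_mult m hm z hzre, Gamma_prod m hm]
  -- rewrite cpow pieces
  have hmz : (m:ℂ) * x / k = (m:ℂ) * z := by rw [hzdef]; ring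
  have hsqrt : ((m:ℂ)) ^ ((1/2 : ℂ)) = ((Real.sqrt m : ℝ) : ℂ) := by
    rw [Real.sqrt_eq_rpow, Complex.ofReal_cpow hmR.le]
    norm_num
  have hmpow_ne : ((m:ℂ)) ^ ((m:ℂ) * z) ≠ 0 := by
    intro hc
    exact hmC ((Complex.cpow_eq_zero_iff _ _).mp hc).1
  have hpow : (m:ℂ) ^ ((1/2 : ℂ) - (m:ℂ) * x / k)
      = ((Real.sqrt m : ℝ) : ℂ) * (((m:ℂ)) ^ ((m:ℂ) * z))⁻¹ := by
    rw [hmz, Complex.cpow_sub _ _ hmC, hsqrt, div_eq_mul_inv]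
  have hM1 : (((1 / m : ℝ)) : ℂ) ^ ((m:ℂ) * z) = (((m:ℂ)) ^ ((m:ℂ) * z))⁻¹ := by
    have h := Complex.mul_cpow_ofReal_nonneg (a := 1/(m:ℝ)) (b := (m:ℝ))
      (by positivity) hmR.le ((m:ℂ) * z)
    rw [show ((1/(m:ℝ) : ℝ) : ℂ) * ((m:ℝ) : ℂ) = 1 by push_cast; field_simp] at h
    rw [Complex.one_cpow] at h
    have : ((m:ℝ) : ℂ) = (m:ℂ) := by push_cast; rfl
    rw [this] at h
    exact eq_inv_of_mul_eq_one_left h.symm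
  -- p-power split
  have hpsplit : (p:ℂ) ^ ((m:ℂ) * z + ((((m:ℝ) - 1) / 2 : ℝ) : ℂ))
      = (p:ℂ) ^ ((m:ℂ) * z) * ((p ^ (((m:ℝ) - 1) / 2) : ℝ) : ℂ) := by
    rw [Complex.cpow_add _ _ hpC, Complex.ofReal_cpow hp.le]
  -- pkGamma (m x)
  have hpk : pkGamma p k ((m:ℂ) * x) = (p:ℂ) ^ ((m:ℂ) * z) / k * Complex.Gamma ((m:ℂ) * z) := by
    rw [pkGamma, show ((m:ℂ) * x) / k = (m:ℂ) * z by rw [hzdef]; ring]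
  rw [hpow, hM1, hpsplit, hpk]
  -- real constant rearrangement
  have hPm : ((2 * π) ^ (((m:ℝ) - 1) / 2) / Real.sqrt m : ℝ)
      = (2 * π) ^ (((m:ℝ) - 1) / 2) * Real.sqrt m / m := by
    rw [div_eq_div_iff (by positivity) hmR.ne']
    rw [mul_assoc, Real.mul_self_sqrt hmR.le]
  rw [hPm]
  push_cast
  have hkpow : ((k:ℂ))⁻¹ ^ m ≠ 0 := by
    apply pow_ne_zero
    simpa using hkC
  have hsq : ((Real.sqrt m : ℝ) : ℂ) ≠ 0 := by
    simp only [ne_eq, Complex.ofReal_eq_zero]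
    positivity
  field_simp
  rw [div_pow, one_pow, show ((k:ℝ):ℂ) ^ m = ((k:ℝ):ℂ) ^ (m-1) * ((k:ℝ):ℂ) by
    rw [← pow_succ]; congr 1; omega]
  field_simp
end

section
/- For x ∈ ℂ with Re(x) > 0, p, k > 0, and a > 0, one has _pΓ_k(x) = a^{x/k} · ∫₀^∞ e^{-(t^k/p)·a} t^{x-1} dt. -/
open MeasureTheory

theorem stmt11 (x : ℂ) (hx : 0 < x.re) (p k a : ℝ) (hp : 0 < p) (hk : 0 < k) (ha : 0 < a) :
    ∫ t in Set.Ioi (0 : ℝ), (Real.exp (-(t ^ k) / p) : ℂ) * (t : ℂ) ^ (x - 1)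
      = (a : ℂ) ^ (x / k) *
        ∫ t in Set.Ioi (0 : ℝ), (Real.exp (-(t ^ k / p) * a) : ℂ) * (t : ℂ) ^ (x - 1) := by
  set c : ℝ := a ^ (1 / k) with hc_def
  have hc : 0 < c := Real.rpow_pos_of_pos ha _
  have hck : c ^ k = a := by
    rw [hc_def, ← Real.rpow_mul ha.le, one_div, inv_mul_cancel₀ hk.ne', Real.rpow_one]
  have hcC : (c : ℂ) ≠ 0 := Complex.ofReal_ne_zero.mpr hc.ne'
  have h3 : (c : ℂ) ^ (1 - x) * ((c : ℂ) ^ (x - 1)) = 1 := by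
    rw [← Complex.cpow_add _ _ hcC]
    norm_num
  have key : ∀ t ∈ Set.Ioi (0:ℝ),
      (Real.exp (-(t ^ k / p) * a) : ℂ) * (t : ℂ) ^ (x - 1)
        = (c : ℂ) ^ (1 - x) *
          ((fun s : ℝ => (Real.exp (-(s ^ k) / p) : ℂ) * (s : ℂ) ^ (x - 1)) (c * t)) := by
    intro t ht
    have ht0 : 0 < t := ht
    have h1 : ((c * t : ℝ) ^ k) = a * t ^ k := by
      rw [Real.mul_rpow hc.le ht0.le, hck]
    simp only [h1]
    have h2 : ((c : ℂ) * (t : ℂ)) ^ (x - 1) = (c : ℂ) ^ (x - 1) * (t : ℂ) ^ (x - 1) :=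
      Complex.mul_cpow_ofReal_nonneg hc.le ht0.le (x-1)
    push_cast
    rw [h2]
    have h4 : (-(↑(t ^ k) / ↑p) * ↑a : ℂ) = -(↑a * ↑(t ^ k)) / ↑p := by push_cast; ring
    calc Complex.exp (-(↑(t ^ k) / ↑p) * ↑a) * (↑t:ℂ) ^ (x-1)
        = ((c:ℂ) ^ (1-x) * (c:ℂ) ^ (x-1)) * (Complex.exp (-(↑a * ↑(t ^ k)) / ↑p) * (↑t:ℂ) ^ (x-1)) := by
          rw [h3, h4, one_mul]
      _ = (c:ℂ) ^ (1-x) * (Complex.exp (-(↑a * ↑(t ^ k)) / ↑p) * ((c:ℂ) ^ (x-1) * (↑t:ℂ) ^ (x-1))) := by ring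
  rw [setIntegral_congr_fun measurableSet_Ioi key, integral_const_mul,
    integral_comp_mul_left_Ioi (fun s : ℝ => (Real.exp (-(s ^ k) / p) : ℂ) * (s : ℂ) ^ (x - 1)) 0 hc,
    mul_zero]
  have hax : (a : ℂ) ^ (x / k) = (c : ℂ) ^ x := by
    rw [Complex.cpow_def_of_ne_zero hcC, Complex.cpow_def_of_ne_zero (Complex.ofReal_ne_zero.mpr ha.ne')]
    congr 1
    rw [← Complex.ofReal_log ha.le, ← Complex.ofReal_log hc.le, hc_def, Real.log_rpow ha]
    push_cast
    have : (k:ℂ) ≠ 0 := Complex.ofReal_ne_zero.mpr hk.ne'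
    field_simp
  rw [hax, Complex.real_smul]
  push_cast
  rw [← mul_assoc, ← mul_assoc, ← Complex.cpow_add _ _ hcC]
  have : x + (1 - x) = 1 := by ring
  rw [this, Complex.cpow_one, mul_inv_cancel₀ hcC, one_mul]
end
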